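/- For every active morphism α : [n] → [m] and every inert morphism ι : [n] → [k] in the simplex category Δ, there is a pushout square in Δ with legs α and ι whose remaining two maps are an inert morphism θ : [m] → [p] and an active morphism φ : [k] → [p] satisfying θ ∘ α = φ ∘ ι, where p = k − n + m. -/

import Mathlib

open CategoryTheory Simplicial

universe u

/-- A morphism in the simplex category is *active* if it preserves endpoints. -/
def IsActive {n m : SimplexCategory} (α : n ⟶ m) : Prop :=
  α.toOrderHom 0 = 0 ∧ α.toOrderHom (Fin.last n.len) = Fin.last m.len

/-- A morphism in the simplex category is *inert* if it is distance preserving. -/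
def IsInert {n m : SimplexCategory} (α : n ⟶ m) : Prop :=
  ∀ i : Fin n.len, (α.toOrderHom i.succ : ℕ) = (α.toOrderHom i.castSucc : ℕ) + 1

namespace ActiveInertAux

/-- Build a morphism in the simplex category from a monotone `ℕ → ℕ` function with a bound. -/
def mkHom' {x y : SimplexCategory} (f : ℕ → ℕ) (hf : Monotone f) (hb : f x.len ≤ y.len) :
    x ⟶ y :=
  SimplexCategory.Hom.mk
    ⟨fun i => ⟨f i, Nat.lt_succ_of_le (le_trans (hf (Nat.le_of_lt_succ i.isLt)) hb)⟩,
     fun _ _ hij => Fin.mk_le_mk.mpr (hf hij)⟩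

@[simp] lemma mkHom'_coe {x y : SimplexCategory} (f : ℕ → ℕ) (hf : Monotone f)
    (hb : f x.len ≤ y.len) (i : Fin (x.len + 1)) :
    ((mkHom' f hf hb).toOrderHom i : ℕ) = f i := rfl

/-- The extension of a simplex category morphism to a monotone function `ℕ → ℕ`. -/
def clampHom {x y : SimplexCategory} (f : x ⟶ y) : ℕ → ℕ :=
  fun j => (f.toOrderHom ⟨min j x.len, Nat.lt_succ_of_le (min_le_right _ _)⟩ : ℕ)

lemma clampHom_mono {x y : SimplexCategory} (f : x ⟶ y) : Monotone (clampHom f) := by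
  intro i j hij
  exact f.toOrderHom.monotone (Fin.mk_le_mk.mpr (by omega))

lemma clampHom_le {x y : SimplexCategory} (f : x ⟶ y) (j : ℕ) : clampHom f j ≤ y.len :=
  Fin.is_le _

lemma clampHom_coe {x y : SimplexCategory} (f : x ⟶ y) (i : Fin (x.len + 1)) :
    clampHom f (i : ℕ) = (f.toOrderHom i : ℕ) := by
  unfold clampHom
  exact congrArg (fun j => (f.toOrderHom j : ℕ)) (Fin.ext (Nat.min_eq_left (Fin.is_le i)))


/-- Thedesc function for the pushout universal map. -/
def descF (a mm nn : ℕ) (gq hq : ℕ → ℕ) : ℕ → ℕ :=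
  fun x => if x < a then hq x else if x ≤ a + mm then gq (x - a) else hq (x - mm + nn)

lemma descF_low {a mm nn : ℕ} {gq hq : ℕ → ℕ} (x : ℕ) (h : x < a) :
    descF a mm nn gq hq x = hq x := if_pos h

lemma descF_mid {a mm nn : ℕ} {gq hq : ℕ → ℕ} {x : ℕ} (h1 : ¬ x < a) (h2 : x ≤ a + mm) :
    descF a mm nn gq hq x = gq (x - a) := by
  unfold descF
  rw [if_neg h1, if_pos h2]

lemma descF_high {a mm nn : ℕ} {gq hq : ℕ → ℕ} {x : ℕ} (h1 : ¬ x < a) (h2 : ¬ x ≤ a + mm) :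
    descF a mm nn gq hq x = hq (x - mm + nn) := by
  unfold descF
  rw [if_neg h1, if_neg h2]

lemma descF_le {a mm nn q : ℕ} {gq hq : ℕ → ℕ} (hg : ∀ x, gq x ≤ q) (hh : ∀ x, hq x ≤ q)
    (x : ℕ) : descF a mm nn gq hq x ≤ q := by
  unfold descF
  split_ifs <;> first | (exact hh _) | (exact hg _)

lemma descF_mono {a mm nn : ℕ} {gq hq : ℕ → ℕ} (hg : Monotone gq) (hh : Monotone hq)
    (e0 : gq 0 = hq a) (e1 : gq mm = hq (a + nn)) : Monotone (descF a mm nn gq hq) := by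
  intro x y hxy
  unfold descF
  split_ifs
  all_goals first
    | exact hh hxy
    | exact hg (by omega)
    | exact hh (by omega)
    | exact le_trans (hh (by omega)) (le_trans (le_of_eq e0.symm) (hg (Nat.zero_le _)))
    | exact le_trans (hg (by omega)) (le_trans (le_of_eq e1) (hh (by omega)))
    | (exfalso; omega)

lemma homext {x y : SimplexCategory} {f g : x ⟶ y}
    (h : ∀ i, (f.toOrderHom i : ℕ) = (g.toOrderHom i : ℕ)) : f = g := by
  apply SimplexCategory.Hom.ext; apply OrderHom.ext; funext i; exact Fin.ext (h i)

end ActiveInertAux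

open ActiveInertAux in
/-- Active-inert pushouts exist in the simplex category: for every active `α : [n] → [m]`
and inert `ι : [n] → [k]` there is a pushout square with remaining legs an inert
`θ : [m] → [p]` and an active `φ : [k] → [p]`, where `p = k - n + m`. -/
theorem active_inert_pushout ⦃n m k : SimplexCategory⦄ (α : n ⟶ m) (ι : n ⟶ k)
    (hα : IsActive α) (hι : IsInert ι) :
    ∃ (θ : m ⟶ SimplexCategory.mk (k.len - n.len + m.len))
      (φ : k ⟶ SimplexCategory.mk (k.len - n.len + m.len)),
      IsInert θ ∧ IsActive φ ∧ α ≫ θ = ι ≫ φ ∧ IsPushout α ι θ φ := by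
  obtain ⟨hα0, hαl⟩ := hα
  set nn := n.len with hnn
  set mm := m.len with hmm
  set kk := k.len with hkk
  set a : ℕ := (ι.toOrderHom 0 : ℕ) with ha
  -- inertness of ι in coordinates
  have hι' : ∀ i : Fin (nn + 1), (ι.toOrderHom i : ℕ) = a + i := by
    intro i
    induction i using Fin.induction with
    | zero => simp [ha]
    | succ i ih =>
      have h := hι i
      rw [h, ih]
      simp only [Fin.val_succ, Fin.coe_castSucc]
      omega
  have hak : a + nn ≤ kk := by
    have h1 := hι' (Fin.last nn)
    have h2 := (ι.toOrderHom (Fin.last nn)).is_le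
    simp only [Fin.val_last] at h1
    omega
  -- activeness of α in coordinates
  have hα0' : (α.toOrderHom 0 : ℕ) = 0 := by simp [hα0]
  have hαl' : (α.toOrderHom (Fin.last nn) : ℕ) = mm := by rw [hαl]; simp; rfl
  -- the clamped version of α
  set αf : ℕ → ℕ := clampHom α with hαf
  have αf_mono : Monotone αf := clampHom_mono α
  have αf0 : αf 0 = 0 := by
    have h := clampHom_coe α 0
    rw [Fin.val_zero] at h
    rw [hαf, h, hα0']
  have αfn : ∀ j, nn ≤ j → αf j = mm := by
    intro j hj
    have he : (⟨min j nn, Nat.lt_succ_of_le (min_le_right _ _)⟩ : Fin (nn + 1)) = Fin.last nn :=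
      Fin.ext (by simp only [Fin.val_last]; omega)
    rw [hαf]
    unfold clampHom
    rw [he, hαl']
  have αf_le : ∀ j, αf j ≤ mm := fun j => clampHom_le α j
  have αf_coe : ∀ i : Fin (nn + 1), αf (i : ℕ) = (α.toOrderHom i : ℕ) :=
    fun i => clampHom_coe α i
  -- the map φ as a function on ℕ
  set φf : ℕ → ℕ := fun i => min i a + αf (i - a) + (i - (a + nn)) with hφf
  have φf_low : ∀ i, i ≤ a → φf i = i := by
    intro i hi
    have h1 : αf (i - a) = 0 := by rw [Nat.sub_eq_zero_of_le hi, αf0]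
    simp only [hφf]
    omega
  have φf_mid : ∀ i, a ≤ i → i ≤ a + nn → φf i = a + αf (i - a) := by
    intro i h1 h2
    simp only [hφf]
    have := αf_le (i - a)
    omega
  have φf_high : ∀ i, a + nn ≤ i → φf i = i - nn + mm := by
    intro i hi
    have h1 : αf (i - a) = mm := αfn _ (by omega)
    simp only [hφf]
    omega
  have φf_mono : Monotone φf := by
    intro i j hij
    have h1 : αf (i - a) ≤ αf (j - a) := αf_mono (by omega)
    simp only [hφf]
    omega
  have hPlen : (SimplexCategory.mk (k.len - n.len + m.len)).len = kk - nn + mm := rfl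
  -- construct θ and φ
  set θ : m ⟶ SimplexCategory.mk (k.len - n.len + m.len) :=
    mkHom' (fun j => a + j) (fun i j h => by simp only; omega)
      (by rw [hPlen]; show a + mm ≤ kk - nn + mm; omega) with hθ
  set φ : k ⟶ SimplexCategory.mk (k.len - n.len + m.len) :=
    mkHom' φf φf_mono (by rw [hPlen, φf_high kk hak]) with hφ
  have θcoe : ∀ j : Fin (mm + 1), (θ.toOrderHom j : ℕ) = a + j := fun j => rfl
  have φcoe : ∀ i : Fin (kk + 1), (φ.toOrderHom i : ℕ) = φf i := fun i => rfl
  -- commutation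
  have hcomm : α ≫ θ = ι ≫ φ := by
    apply SimplexCategory.Hom.ext; apply OrderHom.ext; funext i; apply Fin.ext
    show (θ.toOrderHom (α.toOrderHom i) : ℕ) = (φ.toOrderHom (ι.toOrderHom i) : ℕ)
    rw [θcoe, φcoe, hι' i, φf_mid (a + i) (by omega) (by have := i.is_le; omega),
      show a + (i : ℕ) - a = (i : ℕ) from by omega, αf_coe i]
  refine ⟨θ, φ, ?_, ?_, hcomm, ?_⟩
  · -- θ inert
    intro i
    rw [θcoe, θcoe]
    simp only [Fin.val_succ, Fin.coe_castSucc]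
    omega
  · -- φ active
    constructor
    · apply Fin.ext
      rw [φcoe, Fin.val_zero, Fin.val_zero, φf_low 0 (Nat.zero_le a)]
    · apply Fin.ext
      rw [φcoe, Fin.val_last, Fin.val_last, hPlen, φf_high kk hak]
  · -- the pushout property
    have key : ∀ (s : Limits.PushoutCocone α ι) (i0 : Fin (nn + 1)),
        clampHom s.inl (α.toOrderHom i0 : ℕ) = clampHom s.inr (a + (i0 : ℕ)) := by
      intro s i0
      have hcnd : (s.inl.toOrderHom (α.toOrderHom i0) : ℕ)
          = (s.inr.toOrderHom (ι.toOrderHom i0) : ℕ) :=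
        congrArg (fun f => ((SimplexCategory.Hom.toOrderHom f) i0 : ℕ)) s.condition
      rw [clampHom_coe s.inl, show a + (i0 : ℕ) = ((ι.toOrderHom i0) : ℕ) from (hι' i0).symm,
        clampHom_coe s.inr]
      exact hcnd
    have key0 : ∀ s : Limits.PushoutCocone α ι, clampHom s.inl 0 = clampHom s.inr a := by
      intro s
      simpa [hα0'] using key s 0
    have key1 : ∀ s : Limits.PushoutCocone α ι,
        clampHom s.inl mm = clampHom s.inr (a + nn) := by
      intro s
      simpa [hαl'] using key s (Fin.last nn)
    let desc : ∀ s : Limits.PushoutCocone α ι,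
        SimplexCategory.mk (k.len - n.len + m.len) ⟶ s.pt :=
      fun s => mkHom' (descF a mm nn (clampHom s.inl) (clampHom s.inr))
        (descF_mono (clampHom_mono _) (clampHom_mono _) (key0 s) (key1 s))
        (descF_le (clampHom_le _) (clampHom_le _) _)
    refine IsPushout.of_isColimit (Limits.PushoutCocone.IsColimit.mk hcomm desc ?_ ?_ ?_)
    · -- fac_left
      intro s
      apply homext
      intro j
      show descF a mm nn (clampHom s.inl) (clampHom s.inr) (a + (j : ℕ))
        = (s.inl.toOrderHom j : ℕ)
      rw [descF_mid (by omega) (by have := j.is_le; omega),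
        show a + (j : ℕ) - a = (j : ℕ) from by omega, clampHom_coe]
    · -- fac_right
      intro s
      apply homext
      intro i
      show descF a mm nn (clampHom s.inl) (clampHom s.inr) (φf (i : ℕ))
        = (s.inr.toOrderHom i : ℕ)
      rcases Nat.lt_or_ge (i : ℕ) a with hce | hce
      · rw [φf_low _ (le_of_lt hce), descF_low _ hce, clampHom_coe]
      · rcases Nat.lt_or_ge (i : ℕ) (a + nn + 1) with hce2 | hce2
        · rw [φf_mid _ hce (by omega)]
          have hle := αf_le ((i : ℕ) - a)
          rw [descF_mid (by omega) (by omega),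
            show a + αf ((i : ℕ) - a) - a = αf ((i : ℕ) - a) from by omega,
            show αf ((i : ℕ) - a)
                = ((α.toOrderHom ⟨(i : ℕ) - a, by omega⟩ : Fin (mm + 1)) : ℕ) from
              αf_coe ⟨(i : ℕ) - a, by omega⟩,
            key s ⟨(i : ℕ) - a, by omega⟩,
            show a + ((⟨(i : ℕ) - a, by omega⟩ : Fin (nn + 1)) : ℕ) = (i : ℕ) from by
              simp only []; omega,
            clampHom_coe]
        · rw [φf_high _ (by omega), descF_high (by omega) (by omega),
            show (i : ℕ) - nn + mm - mm + nn = (i : ℕ) from by omega, clampHom_coe]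
    · -- uniqueness
      intro s msc h1 h2
      apply homext
      intro x
      have hx : (x : ℕ) ≤ kk - nn + mm := x.is_le
      show (msc.toOrderHom x : ℕ)
        = descF a mm nn (clampHom s.inl) (clampHom s.inr) (x : ℕ)
      rcases Nat.lt_or_ge (x : ℕ) a with hc1 | hc1
      · have hik : (x : ℕ) < kk + 1 := by omega
        have hφx : φ.toOrderHom ⟨(x : ℕ), hik⟩ = x :=
          Fin.ext (show φf (x : ℕ) = (x : ℕ) from φf_low _ (le_of_lt hc1))
        have e2' : (msc.toOrderHom (φ.toOrderHom ⟨(x : ℕ), hik⟩) : ℕ)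
            = (s.inr.toOrderHom ⟨(x : ℕ), hik⟩ : ℕ) :=
          congrArg (fun f => ((SimplexCategory.Hom.toOrderHom f)
            (⟨(x : ℕ), hik⟩ : Fin (kk + 1)) : ℕ)) h2
        rw [hφx] at e2'
        rw [e2', descF_low _ hc1]
        exact (clampHom_coe s.inr ⟨(x : ℕ), hik⟩).symm
      · rcases Nat.lt_or_ge (x : ℕ) (a + mm + 1) with hc2 | hc2
        · have hjm : (x : ℕ) - a < mm + 1 := by omega
          have hθx : θ.toOrderHom ⟨(x : ℕ) - a, hjm⟩ = x :=
            Fin.ext (show a + ((x : ℕ) - a) = (x : ℕ) from by omega)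
          have e1' : (msc.toOrderHom (θ.toOrderHom ⟨(x : ℕ) - a, hjm⟩) : ℕ)
              = (s.inl.toOrderHom ⟨(x : ℕ) - a, hjm⟩ : ℕ) :=
            congrArg (fun f => ((SimplexCategory.Hom.toOrderHom f)
              (⟨(x : ℕ) - a, hjm⟩ : Fin (mm + 1)) : ℕ)) h1
          rw [hθx] at e1'
          rw [e1', descF_mid (by omega) (by omega)]
          exact (clampHom_coe s.inl ⟨(x : ℕ) - a, hjm⟩).symm
        · have hik : (x : ℕ) - mm + nn < kk + 1 := by omega
          have hφx : φ.toOrderHom ⟨(x : ℕ) - mm + nn, hik⟩ = x :=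
            Fin.ext (show φf ((x : ℕ) - mm + nn) = (x : ℕ) from by
              rw [φf_high _ (by omega)]; omega)
          have e2' : (msc.toOrderHom (φ.toOrderHom ⟨(x : ℕ) - mm + nn, hik⟩) : ℕ)
              = (s.inr.toOrderHom ⟨(x : ℕ) - mm + nn, hik⟩ : ℕ) :=
            congrArg (fun f => ((SimplexCategory.Hom.toOrderHom f)
              (⟨(x : ℕ) - mm + nn, hik⟩ : Fin (kk + 1)) : ℕ)) h2
          rw [hφx] at e2'
          rw [e2', descF_high (by omega) (by omega)]
          exact (clampHom_coe s.inr ⟨(x : ℕ) - mm + nn, hik⟩).symm
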